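/- (Nonvanishing of the eigenfunction derivative at the controlled end.) If λ is an eigenvalue of the Boussinesq spectral problem and φ is an associated eigenfunction, then φ'(l) ≠ 0. -/

import Mathlib

open Set intervalIntegral MeasureTheory Filter Topology

set_option maxHeartbeats 1000000

section Aux

private lemma monoOn_of_hasDerivAt {a b : ℝ} {f f' : ℝ → ℝ}
    (hd : ∀ x ∈ Icc a b, HasDerivAt f (f' x) x)
    (h0 : ∀ x ∈ Icc a b, 0 ≤ f' x) : MonotoneOn f (Icc a b) := by
  apply monotoneOn_of_deriv_nonneg (convex_Icc a b)
  · exact fun x hx => (hd x hx).continuousAt.continuousWithinAt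
  · intro x hx
    rw [interior_Icc] at hx
    exact ((hd x (Ioo_subset_Icc_self hx)).differentiableAt).differentiableWithinAt
  · intro x hx
    rw [interior_Icc] at hx
    rw [(hd x (Ioo_subset_Icc_self hx)).deriv]
    exact h0 x (Ioo_subset_Icc_self hx)

private lemma contDiff_deriv_of {f : ℝ → ℝ} {n : ℕ} (hf : ContDiff ℝ (n+1 : ℕ) f) :
    ContDiff ℝ (n : ℕ) (deriv f) := by
  have : ContDiff ℝ ((n : WithTop ℕ∞) + 1) f := by exact_mod_cast hf
  exact (contDiff_succ_iff_deriv.mp this).2.2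

private lemma integral_pos_of_point {a b x₀ : ℝ} {g : ℝ → ℝ} (hab : a < b)
    (hg : Continuous g) (hnn : ∀ x ∈ Icc a b, 0 ≤ g x)
    (hx₀ : x₀ ∈ Icc a b) (hpos : 0 < g x₀) :
    0 < ∫ x in a..b, g x := by
  obtain ⟨δ, hδ, hball⟩ := Metric.continuousAt_iff.mp hg.continuousAt (g x₀ / 2) (by linarith)
  have key : ∀ x : ℝ, |x - x₀| < δ → g x₀ / 2 < g x := by
    intro x hx
    have := hball (by simpa [Real.dist_eq] using hx)
    rw [Real.dist_eq, abs_lt] at this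
    linarith [this.1]
  set α := max a (x₀ - δ/2) with hα
  set β := min b (x₀ + δ/2) with hβ
  have haα : a ≤ α := le_max_left _ _
  have hβb : β ≤ b := min_le_left _ _
  have hαβ : α < β := by
    apply max_lt
    · exact lt_min (by linarith) (by nlinarith [hx₀.1, hx₀.2])
    · exact lt_min (by nlinarith [hx₀.1, hx₀.2]) (by linarith)
  have hint : ∀ u v : ℝ, IntervalIntegrable g volume u v := fun u v => hg.intervalIntegrable u v
  have hsplit : (∫ x in a..b, g x) = (∫ x in a..α, g x) + (∫ x in α..β, g x) + (∫ x in β..b, g x) := by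
    rw [integral_add_adjacent_intervals (hint a α) (hint α β),
      integral_add_adjacent_intervals (hint a β) (hint β b)]
  have h1 : 0 ≤ ∫ x in a..α, g x := by
    apply intervalIntegral.integral_nonneg haα
    intro u hu
    have : α ≤ b := max_le hab.le (by nlinarith [hx₀.2])
    exact hnn u ⟨hu.1, le_trans hu.2 this⟩
  have h3 : 0 ≤ ∫ x in β..b, g x := by
    apply intervalIntegral.integral_nonneg hβb
    intro u hu
    have : a ≤ β := le_min hab.le (by nlinarith [hx₀.1])
    exact hnn u ⟨le_trans this hu.1, hu.2⟩
  have h2 : 0 < ∫ x in α..β, g x := by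
    apply intervalIntegral_pos_of_pos_on (hint α β) _ hαβ
    intro x hx
    have h1 : x₀ - δ/2 ≤ α := le_max_right _ _
    have h2 : β ≤ x₀ + δ/2 := min_le_right _ _
    have : |x - x₀| < δ := by
      rw [abs_lt]; constructor <;> nlinarith [hx.1, hx.2]
    linarith [key x this]
  linarith

private lemma keyineq (σ0 Qmax Pmax s a b c2 d w qq p : ℝ)
    (hσ0 : 0 < σ0) (hσx : σ0 ≤ s) (hqx : 0 ≤ qq) (hqX : qq ≤ Qmax)
    (hPx : 0 ≤ p) (hPX : p ≤ Pmax) (hd : d = s*c2) :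
    0 ≤ (2+1/σ0+Qmax+Pmax)*(a^2+b^2+d^2+w^2)
      + (2*a*b + 2*b*c2 + 2*d*(w+qq*b) + 2*w*(p*a)) := by
  have hQ0 : 0 ≤ Qmax := le_trans hqx hqX
  have hP0 : 0 ≤ Pmax := le_trans hPx hPX
  have hs0 : (0:ℝ) < 1/σ0 := by positivity
  have hd2 : σ0^2 * c2^2 ≤ d^2 := by
    have h1 : 0 ≤ (s - σ0)*(s + σ0)*c2^2 :=
      mul_nonneg (mul_nonneg (by linarith) (by linarith)) (sq_nonneg c2)
    rw [hd]; nlinarith [h1]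
  have g1 : 0 ≤ a^2 + 2*a*b + b^2 := by nlinarith [sq_nonneg (a+b)]
  have g2 : 0 ≤ (1/σ0)*(b^2+d^2) + 2*b*c2 := by
    have h2 : 0 ≤ (1/σ0) * ((b + σ0*c2)^2) := by positivity
    have e1 : (1/σ0) * ((b + σ0*c2)^2) =
        (1/σ0)*(b^2 + σ0^2*c2^2) + 2*(b*c2) := by
      field_simp; ring
    have e2 : (1/σ0)*(b^2 + σ0^2*c2^2) ≤ (1/σ0)*(b^2+d^2) :=
      mul_le_mul_of_nonneg_left (by linarith) (by positivity)
    nlinarith [h2, e1, e2]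
  have g3 : 0 ≤ d^2 + 2*d*w + w^2 := by nlinarith [sq_nonneg (d+w)]
  have g4 : 0 ≤ Qmax*(d^2+b^2) + 2*d*(qq*b) := by
    have h1 : -(d^2+b^2) ≤ 2*(d*b) := by nlinarith [sq_nonneg (d+b)]
    have hX : (0:ℝ) ≤ d^2+b^2 := by positivity
    have h3 : qq * (-(d^2+b^2)) ≤ qq * (2*(d*b)) := mul_le_mul_of_nonneg_left h1 hqx
    have h4 : qq*(d^2+b^2) ≤ Qmax*(d^2+b^2) := mul_le_mul_of_nonneg_right hqX hX
    nlinarith [h3, h4]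
  have g5 : 0 ≤ Pmax*(w^2+a^2) + 2*w*(p*a) := by
    have h1 : -(w^2+a^2) ≤ 2*(w*a) := by nlinarith [sq_nonneg (w+a)]
    have hX : (0:ℝ) ≤ w^2+a^2 := by positivity
    have h3 : p * (-(w^2+a^2)) ≤ p * (2*(w*a)) := mul_le_mul_of_nonneg_left h1 hPx
    have h4 : p*(w^2+a^2) ≤ Pmax*(w^2+a^2) := mul_le_mul_of_nonneg_right hPX hX
    nlinarith [h3, h4]
  have leftover : 0 ≤ (1+1/σ0+Qmax)*a^2 + (1+Pmax)*b^2 + (1+Pmax)*d^2 + (1+1/σ0+Qmax)*w^2 := by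
    have m1 : 0 ≤ (1+1/σ0+Qmax)*a^2 := mul_nonneg (by linarith) (sq_nonneg a)
    have m2 : 0 ≤ (1+Pmax)*b^2 := mul_nonneg (by linarith) (sq_nonneg b)
    have m3 : 0 ≤ (1+Pmax)*d^2 := mul_nonneg (by linarith) (sq_nonneg d)
    have m4 : 0 ≤ (1+1/σ0+Qmax)*w^2 := mul_nonneg (by linarith) (sq_nonneg w)
    linarith
  have hsum : (2+1/σ0+Qmax+Pmax)*(a^2+b^2+d^2+w^2)
      + (2*a*b + 2*b*c2 + 2*d*(w+qq*b) + 2*w*(p*a))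
      = (a^2+2*a*b+b^2) + ((1/σ0)*(b^2+d^2) + 2*b*c2) + (d^2+2*d*w+w^2)
        + (Qmax*(d^2+b^2)+2*d*(qq*b)) + (Pmax*(w^2+a^2)+2*w*(p*a))
        + ((1+1/σ0+Qmax)*a^2 + (1+Pmax)*b^2 + (1+Pmax)*d^2 + (1+1/σ0+Qmax)*w^2) := by
    ring
  linarith [g1, g2, g3, g4, g5, leftover, hsum]

private lemma backward_unique (l σ0 : ℝ) (hl : 0 < l) (hσ0 : 0 < σ0)
    (σ q P u u1 u2 V W : ℝ → ℝ)
    (hσ : ∀ x ∈ Icc (0:ℝ) l, σ0 ≤ σ x)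
    (hqc : Continuous q) (hq : ∀ x ∈ Icc (0:ℝ) l, 0 ≤ q x)
    (hPc : Continuous P) (hP : ∀ x ∈ Icc (0:ℝ) l, 0 ≤ P x)
    (hu : ∀ x, HasDerivAt u (u1 x) x)
    (hu1 : ∀ x, HasDerivAt u1 (u2 x) x)
    (hV : ∀ x, HasDerivAt V (W x + q x * u1 x) x)
    (hW : ∀ x ∈ Icc (0:ℝ) l, HasDerivAt W (P x * u x) x)
    (hV2 : ∀ x ∈ Icc (0:ℝ) l, V x = σ x * u2 x)
    (hul : u l = 0) (hu1l : u1 l = 0) (hVl : V l = 0) (hWl : W l = 0) :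
    ∀ x ∈ Icc (0:ℝ) l, u x = 0 := by
  obtain ⟨xq, hxq, hxqmax'⟩ := isCompact_Icc.exists_isMaxOn (nonempty_Icc.mpr hl.le)
    (hqc.continuousOn (s := Icc (0:ℝ) l))
  obtain ⟨xp, hxp, hxpmax'⟩ := isCompact_Icc.exists_isMaxOn (nonempty_Icc.mpr hl.le)
    (hPc.continuousOn (s := Icc (0:ℝ) l))
  have hxqmax : ∀ x ∈ Icc (0:ℝ) l, q x ≤ q xq := fun x hx => hxqmax' hx
  have hxpmax : ∀ x ∈ Icc (0:ℝ) l, P x ≤ P xp := fun x hx => hxpmax' hx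
  have hQ0 : 0 ≤ q xq := hq xq hxq
  have hP0 : 0 ≤ P xp := hP xp hxp
  set K : ℝ := 2 + 1/σ0 + q xq + P xp with hK
  have hEd : ∀ x ∈ Icc (0:ℝ) l, HasDerivAt (fun y => u y^2 + u1 y^2 + V y^2 + W y^2)
      (2*u x*u1 x + 2*u1 x*u2 x + 2*V x*(W x + q x * u1 x) + 2*W x*(P x * u x)) x := by
    intro x hx
    have h1 := ((hu x).mul (hu x)).add ((hu1 x).mul (hu1 x))
    have h2 := ((hV x).mul (hV x)).add ((hW x hx).mul (hW x hx))
    have h3 := h1.add h2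
    have h4 : HasDerivAt (fun y => u y * u y + u1 y * u1 y + (V y * V y + W y * W y))
        (2*u x*u1 x + 2*u1 x*u2 x + 2*V x*(W x + q x * u1 x) + 2*W x*(P x * u x)) x := by
      refine h3.congr_deriv ?_; ring
    convert h4 using 2 with y
    ring
  have hkey : ∀ x ∈ Icc (0:ℝ) l,
      0 ≤ K * (u x^2 + u1 x^2 + V x^2 + W x^2)
        + (2*u x*u1 x + 2*u1 x*u2 x + 2*V x*(W x + q x * u1 x) + 2*W x*(P x * u x)) := by
    intro x hx
    have h := keyineq σ0 (q xq) (P xp) (σ x) (u x) (u1 x) (u2 x) (V x) (W x) (q x) (P x)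
      hσ0 (hσ x hx) (hq x hx) (hxqmax x hx) (hP x hx) (hxpmax x hx) (hV2 x hx)
    rw [hK]
    exact h
  have hGd : ∀ x ∈ Icc (0:ℝ) l,
      HasDerivAt (fun y => Real.exp (K*y) * (u y^2 + u1 y^2 + V y^2 + W y^2))
        (Real.exp (K*x) * (K * (u x^2 + u1 x^2 + V x^2 + W x^2)
          + (2*u x*u1 x + 2*u1 x*u2 x + 2*V x*(W x + q x * u1 x) + 2*W x*(P x * u x)))) x := by
    intro x hx
    have h1 : HasDerivAt (fun t : ℝ => K * t) K x := by
      simpa using (hasDerivAt_id x).const_mul K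
    have h2 : HasDerivAt (fun t : ℝ => Real.exp (K*t)) (Real.exp (K*x) * K) x :=
      (Real.hasDerivAt_exp (K*x)).comp x h1
    have h3 := h2.mul (hEd x hx)
    refine h3.congr_deriv ?_
    ring
  have hmono : MonotoneOn (fun y => Real.exp (K*y) * (u y^2 + u1 y^2 + V y^2 + W y^2))
      (Icc 0 l) :=
    monoOn_of_hasDerivAt hGd (fun x hx => mul_nonneg (Real.exp_pos _).le (hkey x hx))
  intro x hx
  have hle := hmono hx (right_mem_Icc.mpr hl.le) hx.2
  simp only [hul, hu1l, hVl, hWl] at hle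
  norm_num at hle
  have hexp : 0 < Real.exp (K*x) := Real.exp_pos _
  have hS : u x ^ 2 + u1 x ^ 2 + V x ^ 2 + W x ^ 2 ≤ 0 := by
    by_contra hc
    push_neg at hc
    nlinarith [mul_pos hexp hc]
  have h2 : u x ^ 2 = 0 := by
    nlinarith [sq_nonneg (u x), sq_nonneg (u1 x), sq_nonneg (V x), sq_nonneg (W x)]
  exact pow_eq_zero_iff (by norm_num) |>.mp h2

private lemma core_pos (l σ0 : ℝ) (hl : 0 < l) (hσ0 : 0 < σ0)
    (σ q P u u1 u2 V W : ℝ → ℝ)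
    (hσc : Continuous σ) (hσ : ∀ x ∈ Icc (0:ℝ) l, σ0 ≤ σ x)
    (hqc : Continuous q) (hq : ∀ x ∈ Icc (0:ℝ) l, 0 ≤ q x)
    (hP : ∀ x ∈ Icc (0:ℝ) l, 0 ≤ P x)
    (hu2c : Continuous u2) (hWc : Continuous W)
    (hu : ∀ x, HasDerivAt u (u1 x) x)
    (hu1 : ∀ x, HasDerivAt u1 (u2 x) x)
    (hV : ∀ x, HasDerivAt V (W x + q x * u1 x) x)
    (hW : ∀ x ∈ Icc (0:ℝ) l, HasDerivAt W (P x * u x) x)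
    (hV2 : ∀ x ∈ Icc (0:ℝ) l, V x = σ x * u2 x)
    (hul : u l = 0) (hu1l : u1 l = 0) (hVl : V l = 0) (hWl : 0 < W l) :
    u 0 < 0 := by
  have hucont : Continuous u := continuous_iff_continuousAt.mpr fun x => (hu x).continuousAt
  have hu1cont : Continuous u1 := continuous_iff_continuousAt.mpr fun x => (hu1 x).continuousAt
  have hVcont : Continuous V := continuous_iff_continuousAt.mpr fun x => (hV x).continuousAt
  set c := W l with hc
  -- maxima
  obtain ⟨xs, hxs, hxsmax'⟩ := isCompact_Icc.exists_isMaxOn (nonempty_Icc.mpr hl.le)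
    (hσc.continuousOn (s := Icc (0:ℝ) l))
  set σmax := σ xs with hσmaxdef
  have hσmax : ∀ y ∈ Icc (0:ℝ) l, σ y ≤ σmax := fun y hy => hxsmax' hy
  have hσmaxpos : 0 < σmax := lt_of_lt_of_le hσ0 (hσ xs hxs)
  obtain ⟨xq, hxq, hxqmax'⟩ := isCompact_Icc.exists_isMaxOn (nonempty_Icc.mpr hl.le)
    (hqc.continuousOn (s := Icc (0:ℝ) l))
  set Qmax := q xq with hQmaxdef
  have hQmax : ∀ y ∈ Icc (0:ℝ) l, q y ≤ Qmax := fun y hy => hxqmax' hy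
  have hQ0 : 0 ≤ Qmax := hq xq hxq
  obtain ⟨xb, hxb, hxbmax'⟩ := isCompact_Icc.exists_isMaxOn (nonempty_Icc.mpr hl.le)
    (hu2c.abs.continuousOn (s := Icc (0:ℝ) l))
  set B := |u2 xb| with hBdef
  have hB : ∀ y ∈ Icc (0:ℝ) l, |u2 y| ≤ B := fun y hy => hxbmax' hy
  have hB0 : 0 ≤ B := abs_nonneg _
  -- global bounds on u1 near l
  have hu1ub : ∀ y ∈ Icc (0:ℝ) l, u1 y ≤ B * (l - y) := by
    intro y hy
    have hmono : MonotoneOn (fun t => u1 t + B * t) (Icc (0:ℝ) l) := by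
      apply monoOn_of_hasDerivAt (f' := fun t => u2 t + B)
      · intro t ht
        have hBt : HasDerivAt (fun s : ℝ => B * s) B t := by
          simpa using (hasDerivAt_id t).const_mul B
        exact (hu1 t).add hBt
      · intro t ht
        have := hB t ht
        have := abs_le.mp this
        linarith [this.1]
    have := hmono hy (right_mem_Icc.mpr hl.le) hy.2
    simp only at this
    rw [hu1l] at this
    linarith
  have hu1lb : ∀ y ∈ Icc (0:ℝ) l, -(B * (l - y)) ≤ u1 y := by
    intro y hy
    have hmono : MonotoneOn (fun t => B * t - u1 t) (Icc (0:ℝ) l) := by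
      apply monoOn_of_hasDerivAt (f' := fun t => B - u2 t)
      · intro t ht
        have hBt : HasDerivAt (fun s : ℝ => B * s) B t := by
          simpa using (hasDerivAt_id t).const_mul B
        exact hBt.sub (hu1 t)
      · intro t ht
        have := abs_le.mp (hB t ht)
        linarith [this.2]
    have := hmono hy (right_mem_Icc.mpr hl.le) hy.2
    simp only at this
    rw [hu1l] at this
    linarith
  -- the seed point a := l - δ
  obtain ⟨δ1, hδ1, hδ1W⟩ : ∃ δ1 > 0, ∀ y : ℝ, |y - l| < δ1 → c/2 < W y := by
    obtain ⟨δ1, hδ1, h⟩ := Metric.continuousAt_iff.mp hWc.continuousAt (c/2) (by linarith)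
    refine ⟨δ1, hδ1, fun y hy => ?_⟩
    have := h (by simpa [Real.dist_eq] using hy)
    rw [Real.dist_eq, abs_lt] at this
    have hcc : c = W l := hc
    linarith [this.1]
  set δ : ℝ := min (δ1/2) (min (l/2) (c/(8*(Qmax*B+1)))) with hδdef
  have hδpos : 0 < δ := by
    apply lt_min (by linarith)
    apply lt_min (by linarith)
    have : 0 < Qmax*B+1 := by nlinarith
    positivity
  set a := l - δ with hadef
  have hal : a < l := by simp only [hadef]; linarith
  have ha0 : 0 ≤ a := by
    have : δ ≤ l/2 := le_trans (min_le_right _ _) (min_le_left _ _)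
    simp only [hadef]; linarith
  have hsub : Icc a l ⊆ Icc (0:ℝ) l := fun y hy => ⟨le_trans ha0 hy.1, hy.2⟩
  have hWa : ∀ y ∈ Icc a l, c/2 < W y := by
    intro y hy
    apply hδ1W
    rw [abs_lt]
    have h1 : δ ≤ δ1/2 := min_le_left _ _
    constructor
    · have := hy.1; simp only [hadef] at this; linarith
    · linarith [hy.2]
  have hVa : ∀ y ∈ Icc a l, V y ≤ -((c/4)*(l - y)) := by
    intro y hy
    have hmono : MonotoneOn (fun t => V t - (c/4)*t) (Icc a l) := by
      apply monoOn_of_hasDerivAt (f' := fun t => W t + q t * u1 t - c/4)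
      · intro t ht
        have hct : HasDerivAt (fun s : ℝ => (c/4) * s) (c/4) t := by
          simpa using (hasDerivAt_id t).const_mul (c/4)
        exact (hV t).sub hct
      · intro t ht
        have h1 : c/2 < W t := hWa t ht
        have h2 : -(B*(l-t)) ≤ u1 t := hu1lb t (hsub ht)
        have h3 : 0 ≤ q t := hq t (hsub ht)
        have h4 : q t ≤ Qmax := hQmax t (hsub ht)
        have h5 : l - t ≤ δ := by have := ht.1; simp only [hadef] at this; linarith
        have h6 : δ ≤ c/(8*(Qmax*B+1)) := le_trans (min_le_right _ _) (min_le_right _ _)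
        have h7 : q t * u1 t ≥ -(Qmax * B * δ) := by
          have hBl : 0 ≤ B * (l - t) := mul_nonneg hB0 (by linarith [ht.2])
          have : q t * u1 t ≥ q t * (-(B*(l-t))) := mul_le_mul_of_nonneg_left h2 h3
          have h8 : q t * (B*(l-t)) ≤ Qmax * (B*(l-t)) := mul_le_mul_of_nonneg_right h4 hBl
          have h9 : Qmax * (B*(l-t)) ≤ Qmax * (B*δ) := by
            apply mul_le_mul_of_nonneg_left _ hQ0
            exact mul_le_mul_of_nonneg_left h5 hB0
          nlinarith
        have h10 : Qmax * B * δ ≤ c/8 := by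
          have hpos : (0:ℝ) < 8*(Qmax*B+1) := by nlinarith
          rw [le_div_iff₀ hpos] at h6
          nlinarith [mul_nonneg (mul_nonneg hQ0 hB0) hδpos.le]
        linarith
    have := hmono hy (right_mem_Icc.mpr hal.le) hy.2
    simp only at this
    rw [hVl] at this
    linarith
  have hu2a : ∀ y ∈ Icc a l, u2 y ≤ 0 := by
    intro y hy
    have h1 : σ y * u2 y ≤ 0 := by
      rw [← hV2 y (hsub hy)]
      have := hVa y hy
      have h2 : 0 ≤ (c/4)*(l-y) := mul_nonneg (by linarith) (by linarith [hy.2])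
      linarith
    have h2 : 0 < σ y := lt_of_lt_of_le hσ0 (hσ y (hsub hy))
    nlinarith
  have hu1a : ∀ y ∈ Icc a l, 0 ≤ u1 y := by
    intro y hy
    have hmono : MonotoneOn (fun t => -u1 t) (Icc a l) := by
      apply monoOn_of_hasDerivAt (f' := fun t => -u2 t)
      · exact fun t ht => (hu1 t).neg
      · exact fun t ht => by linarith [hu2a t ht]
    have := hmono hy (right_mem_Icc.mpr hal.le) hy.2
    simp only at this
    rw [hu1l] at this
    linarith
  have hua : ∀ y ∈ Icc a l, u y ≤ 0 := by
    intro y hy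
    have hmono : MonotoneOn u (Icc a l) := by
      apply monoOn_of_hasDerivAt (f' := u1)
      · exact fun t ht => hu t
      · exact fun t ht => hu1a t ht
    have := hmono hy (right_mem_Icc.mpr hal.le) hy.2
    rw [hul] at this
    exact this
  -- the set A
  set A : Set ℝ := {x | x ∈ Icc (0:ℝ) l ∧
    ∀ y ∈ Icc x l, u y ≤ 0 ∧ 0 ≤ u1 y ∧ V y ≤ 0 ∧ c/2 ≤ W y} with hAdef
  have hseed : a ∈ A := by
    refine ⟨⟨ha0, hal.le⟩, fun y hy => ⟨hua y hy, hu1a y hy, ?_, (hWa y hy).le⟩⟩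
    have := hVa y hy
    have h2 : 0 ≤ (c/4)*(l-y) := mul_nonneg (by linarith) (by linarith [hy.2])
    linarith
  have hAne : A.Nonempty := ⟨a, hseed⟩
  have hbdd : BddBelow A := ⟨0, fun x hx => hx.1.1⟩
  set m := sInf A with hmdef
  have hm0 : 0 ≤ m := le_csInf hAne fun x hx => hx.1.1
  have hma : m ≤ a := csInf_le hbdd hseed
  have hml : m < l := lt_of_le_of_lt hma hal
  -- m ∈ A
  have hcond : ∀ y, m < y → y ≤ l → u y ≤ 0 ∧ 0 ≤ u1 y ∧ V y ≤ 0 ∧ c/2 ≤ W y := by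
    intro y hy1 hy2
    obtain ⟨x, hxA, hxy⟩ := (csInf_lt_iff hbdd hAne).mp hy1
    exact hxA.2 y ⟨hxy.le, hy2⟩
  have hmem : m ∈ A := by
    refine ⟨⟨hm0, hml.le⟩, fun y hy => ?_⟩
    rcases eq_or_lt_of_le hy.1 with heq | hlt
    · subst heq
      set S : Set ℝ := {z | u z ≤ 0} ∩ ({z | 0 ≤ u1 z} ∩ ({z | V z ≤ 0} ∩ {z | c/2 ≤ W z}))
        with hSdef
      have hScl : IsClosed S := by
        refine ((isClosed_le hucont continuous_const).inter
          ((isClosed_le continuous_const hu1cont).inter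
            ((isClosed_le hVcont continuous_const).inter
              (isClosed_le continuous_const hWc))))
      have hsub2 : Ioc m l ⊆ S := by
        intro z hz
        obtain ⟨h1, h2, h3, h4⟩ := hcond z hz.1 hz.2
        exact ⟨h1, h2, h3, h4⟩
      have hycl : m ∈ closure (Ioc m l) := by
        rw [closure_Ioc hml.ne]
        exact left_mem_Icc.mpr hml.le
      have := (closure_minimal hsub2 hScl) hycl
      exact ⟨this.1, this.2.1, this.2.2.1, this.2.2.2⟩
    · exact hcond y hlt hy.2
  -- quantitative bounds for members of A
  have key : ∀ x, x ∈ A → ∀ y ∈ Icc x l,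
      V y ≤ -((c/2)*(l-y)) ∧ (c/2)*(l-y)^2/(2*σmax) ≤ u1 y ∧
      u y ≤ -((c/2)*(l-y)^3/(6*σmax)) ∧ c ≤ W y := by
    intro x hxA y hy
    have hx0 : (0:ℝ) ≤ x := hxA.1.1
    have hxl : x ≤ l := hxA.1.2
    have hsubx : Icc x l ⊆ Icc (0:ℝ) l := fun z hz => ⟨le_trans hx0 hz.1, hz.2⟩
    -- W ≥ c on [x,l]
    have hWge : ∀ z ∈ Icc x l, c ≤ W z := by
      intro z hz
      have hmono : MonotoneOn (fun t => -W t) (Icc x l) := by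
        apply monoOn_of_hasDerivAt (f' := fun t => -(P t * u t))
        · exact fun t ht => (hW t (hsubx ht)).neg
        · intro t ht
          have h1 : 0 ≤ P t := hP t (hsubx ht)
          have h2 : u t ≤ 0 := (hxA.2 t ht).1
          nlinarith
      have := hmono hz (right_mem_Icc.mpr hxl) hz.2
      simp only at this
      rw [hc]
      linarith
    -- V bound
    have hVb : ∀ z ∈ Icc x l, V z ≤ -((c/2)*(l-z)) := by
      intro z hz
      have hmono : MonotoneOn (fun t => V t - (c/2)*t) (Icc x l) := by
        apply monoOn_of_hasDerivAt (f' := fun t => W t + q t * u1 t - c/2)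
        · intro t ht
          have hct : HasDerivAt (fun s : ℝ => (c/2) * s) (c/2) t := by
            simpa using (hasDerivAt_id t).const_mul (c/2)
          exact (hV t).sub hct
        · intro t ht
          have h1 : c/2 ≤ W t := (hxA.2 t ht).2.2.2
          have h2 : 0 ≤ q t * u1 t := mul_nonneg (hq t (hsubx ht)) (hxA.2 t ht).2.1
          linarith
      have := hmono hz (right_mem_Icc.mpr hxl) hz.2
      simp only at this
      rw [hVl] at this
      linarith
    -- u2 bound
    have hu2b : ∀ z ∈ Icc x l, u2 z ≤ -((c/2)*(l-z))/σmax := by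
      intro z hz
      have h1 : σ z * u2 z ≤ -((c/2)*(l-z)) := by rw [← hV2 z (hsubx hz)]; exact hVb z hz
      have h2 : u2 z ≤ 0 := by
        have h3 : 0 < σ z := lt_of_lt_of_le hσ0 (hσ z (hsubx hz))
        have h4 : 0 ≤ (c/2)*(l-z) := mul_nonneg (by linarith) (by linarith [hz.2])
        nlinarith
      have h5 : σmax * u2 z ≤ σ z * u2 z := by
        have := hσmax z (hsubx hz)
        nlinarith
      rw [le_div_iff₀ hσmaxpos]
      nlinarith
    -- u1 bound
    have hu1b : ∀ z ∈ Icc x l, (c/2)*(l-z)^2/(2*σmax) ≤ u1 z := by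
      intro z hz
      have hmono : MonotoneOn (fun t => (c/2)*(l-t)^2/(2*σmax) - u1 t) (Icc x l) := by
        apply monoOn_of_hasDerivAt (f' := fun t => -((c/2)*(l-t))/σmax - u2 t)
        · intro t ht
          have hlt : HasDerivAt (fun s : ℝ => l - s) (-1) t := by
            simpa using (hasDerivAt_id' t).const_sub l
          have hp2 := hlt.pow 2
          have hp3 := (hp2.const_mul (c/2)).div_const (2*σmax)
          have hfinal := hp3.sub (hu1 t)
          refine hfinal.congr_deriv ?_
          field_simp
          ring
        · intro t ht
          have := hu2b t ht
          linarith
      have := hmono hz (right_mem_Icc.mpr hxl) hz.2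
      simp only at this
      rw [hu1l] at this
      norm_num at this
      linarith
    -- u bound
    have hub : ∀ z ∈ Icc x l, u z ≤ -((c/2)*(l-z)^3/(6*σmax)) := by
      intro z hz
      have hmono : MonotoneOn (fun t => u t + (c/2)*(l-t)^3/(6*σmax)) (Icc x l) := by
        apply monoOn_of_hasDerivAt (f' := fun t => u1 t - (c/2)*(l-t)^2/(2*σmax))
        · intro t ht
          have hlt : HasDerivAt (fun s : ℝ => l - s) (-1) t := by
            simpa using (hasDerivAt_id' t).const_sub l
          have hp2 := hlt.pow 3
          have hp3 := (hp2.const_mul (c/2)).div_const (6*σmax)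
          have hfinal := (hu t).add hp3
          refine hfinal.congr_deriv ?_
          field_simp
          ring
        · intro t ht
          have := hu1b t ht
          linarith
      have := hmono hz (right_mem_Icc.mpr hxl) hz.2
      simp only at this
      rw [hul] at this
      norm_num at this
      linarith
    exact ⟨hVb y hy, hu1b y hy, hub y hy, hWge y hy⟩
  -- m = 0
  have hmzero : m = 0 := by
    by_contra hne
    have hmpos : 0 < m := lt_of_le_of_ne hm0 (Ne.symm hne)
    obtain ⟨hVm, hu1m, hum, hWm⟩ := key m hmem m ⟨le_rfl, hml.le⟩
    have hVmneg : V m < 0 := by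
      have : 0 < (c/2)*(l-m) := mul_pos (by linarith) (by linarith)
      linarith
    have hu1mpos : 0 < u1 m := by
      have : 0 < (c/2)*(l-m)^2/(2*σmax) :=
        div_pos (mul_pos (by linarith) (pow_pos (by linarith) 2)) (by linarith)
      linarith
    have humneg : u m < 0 := by
      have : 0 < (c/2)*(l-m)^3/(6*σmax) :=
        div_pos (mul_pos (by linarith) (pow_pos (by linarith) 3)) (by linarith)
      linarith
    have hWmgt : c/2 < W m := by linarith
    set U : Set ℝ := {z | u z < 0} ∩ ({z | 0 < u1 z} ∩ ({z | V z < 0} ∩ {z | c/2 < W z}))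
      with hUdef
    have hUopen : IsOpen U :=
      ((isOpen_lt hucont continuous_const).inter
        ((isOpen_lt continuous_const hu1cont).inter
          ((isOpen_lt hVcont continuous_const).inter
            (isOpen_lt continuous_const hWc))))
    have hmU : m ∈ U := ⟨humneg, hu1mpos, hVmneg, hWmgt⟩
    obtain ⟨ε, hε, hball⟩ := Metric.isOpen_iff.mp hUopen m hmU
    set δ' : ℝ := min (ε/2) m with hδ'def
    have hδ'pos : 0 < δ' := lt_min (by linarith) hmpos
    have hδ'm : δ' ≤ m := min_le_right _ _
    have hnew : m - δ' ∈ A := by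
      refine ⟨⟨by linarith, by linarith⟩, fun y hy => ?_⟩
      rcases le_or_gt m y with hcase | hcase
      · exact hmem.2 y ⟨hcase, hy.2⟩
      · have hyball : y ∈ Metric.ball m ε := by
          rw [Metric.mem_ball, Real.dist_eq, abs_lt]
          have h1 : δ' ≤ ε/2 := min_le_left _ _
          constructor
          · linarith [hy.1]
          · linarith
        obtain ⟨h1, h2, h3, h4⟩ := hball hyball
        exact ⟨h1.le, h2.le, h3.le, h4.le⟩
    have := csInf_le hbdd hnew
    rw [← hmdef] at this
    linarith
  -- conclusion
  have h0A : (0:ℝ) ∈ A := by rw [← hmzero]; exact hmem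
  obtain ⟨_, _, hu0, _⟩ := key 0 h0A 0 ⟨le_rfl, hl.le⟩
  have : 0 < (c/2)*(l-0)^3/(6*σmax) :=
    div_pos (mul_pos (by linarith) (pow_pos (by linarith) 3)) (by linarith)
  linarith

end Aux

noncomputable section

/-- The fourth-order Boussinesq differential operator `φ ↦ (σ φ'')'' − (q φ')'`. -/
def boussinesqOp (σ q : ℝ → ℝ) (φ : ℝ → ℝ) : ℝ → ℝ :=
  fun x => deriv (deriv (fun t => σ t * deriv (deriv φ) t)) x
    - deriv (fun t => q t * deriv φ t) x

/-- `φ` is a (nontrivial) eigenfunction of the Boussinesq spectral problem on `[0,l]`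
with eigenvalue `lam`: it is `C⁴`, not identically zero on `[0,l]`, satisfies
`(σ φ'')'' − (q φ')' = lam ρ φ` on `[0,l]` and the boundary conditions
`φ(0) = φ''(0) = φ(l) = φ''(l) = 0`. -/
def IsBoussinesqEigenpair (σ q ρ : ℝ → ℝ) (l lam : ℝ) (φ : ℝ → ℝ) : Prop :=
  ContDiff ℝ 4 φ ∧ (∃ x ∈ Icc (0:ℝ) l, φ x ≠ 0) ∧
    (∀ x ∈ Icc (0:ℝ) l, boussinesqOp σ q φ x = lam * ρ x * φ x) ∧
    φ 0 = 0 ∧ deriv (deriv φ) 0 = 0 ∧ φ l = 0 ∧ deriv (deriv φ) l = 0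

/-- `lam` is an eigenvalue of the Boussinesq spectral problem on `[0,l]`. -/
def IsBoussinesqEigenvalue (σ q ρ : ℝ → ℝ) (l lam : ℝ) : Prop :=
  ∃ φ : ℝ → ℝ, IsBoussinesqEigenpair σ q ρ l lam φ

/-- **Nonvanishing of the eigenfunction derivative at the controlled end.** If `lam` is
an eigenvalue with eigenfunction `φ`, then `φ'(l) ≠ 0`. -/
theorem boussinesq_eigenfunction_deriv_ne_zero
    (l : ℝ) (hl : 0 < l)
    (ρ σ q : ℝ → ℝ)
    (hρs : ContDiff ℝ 3 ρ) (hσs : ContDiff ℝ 3 σ) (hqs : ContDiff ℝ 1 q)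
    (ρ0 σ0 : ℝ) (hρ0 : 0 < ρ0) (hσ0 : 0 < σ0)
    (hρb : ∀ x ∈ Icc (0:ℝ) l, ρ0 ≤ ρ x)
    (hσb : ∀ x ∈ Icc (0:ℝ) l, σ0 ≤ σ x)
    (hqb : ∀ x ∈ Icc (0:ℝ) l, 0 ≤ q x)
    (lam : ℝ) (φ : ℝ → ℝ)
    (hφ : IsBoussinesqEigenpair σ q ρ l lam φ) :
    deriv φ l ≠ 0 := by
  obtain ⟨hφ4, ⟨x₀, hx₀, hφx₀⟩, heq, hφ0, hφ''0, hφl, hφ''l⟩ := hφ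
  intro hcontra
  -- smoothness
  have hφ4' : ContDiff ℝ ((3:ℕ)+1 : ℕ) φ := by exact_mod_cast hφ4
  have h3 : ContDiff ℝ (3:ℕ) (deriv φ) := contDiff_deriv_of hφ4'
  have h3' : ContDiff ℝ ((2:ℕ)+1 : ℕ) (deriv φ) := by exact_mod_cast h3
  have h2 : ContDiff ℝ (2:ℕ) (deriv (deriv φ)) := contDiff_deriv_of h3'
  set v : ℝ → ℝ := fun t => σ t * deriv (deriv φ) t with hvdef
  have hσ2 : ContDiff ℝ (2:ℕ) σ := hσs.of_le (by norm_num)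
  have hv : ContDiff ℝ (2:ℕ) v := hσ2.mul h2
  have hv' : ContDiff ℝ ((1:ℕ)+1 : ℕ) v := by exact_mod_cast hv
  have hv1 : ContDiff ℝ (1:ℕ) (deriv v) := contDiff_deriv_of hv'
  have hφ1c : Continuous (deriv φ) := h3.continuous
  have hφ2c : Continuous (deriv (deriv φ)) := h2.continuous
  have hqφ1 : ContDiff ℝ (1:ℕ) (fun t => q t * deriv φ t) := by
    have : ContDiff ℝ (1:ℕ) q := by exact_mod_cast hqs
    exact this.mul (h3.of_le (by norm_num))
  set w : ℝ → ℝ := fun x => deriv v x - q x * deriv φ x with hwdef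
  have hwc : Continuous w := hv1.continuous.sub (hqs.continuous.mul hφ1c)
  -- derivative facts
  have hd_u : ∀ x, HasDerivAt φ (deriv φ x) x := fun x =>
    ((hφ4.differentiable (by norm_num)) x).hasDerivAt
  have hd_u1 : ∀ x, HasDerivAt (deriv φ) (deriv (deriv φ) x) x := fun x =>
    ((h3.differentiable (by norm_num)) x).hasDerivAt
  have hd_v : ∀ x, HasDerivAt v (deriv v x) x := fun x =>
    ((hv.differentiable (by norm_num)) x).hasDerivAt
  have hd_v1 : ∀ x, HasDerivAt (deriv v) (deriv (deriv v) x) x := fun x =>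
    ((hv1.differentiable (by norm_num)) x).hasDerivAt
  have hd_qφ1 : ∀ x, HasDerivAt (fun t => q t * deriv φ t)
      (deriv (fun t => q t * deriv φ t) x) x := fun x =>
    ((hqφ1.differentiable (by norm_num)) x).hasDerivAt
  have hd_w : ∀ x, HasDerivAt w
      (deriv (deriv v) x - deriv (fun t => q t * deriv φ t) x) x := fun x =>
    (hd_v1 x).sub (hd_qφ1 x)
  have hw_eq : ∀ x ∈ Icc (0:ℝ) l,
      deriv (deriv v) x - deriv (fun t => q t * deriv φ t) x = lam * ρ x * φ x := by
    intro x hx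
    have := heq x hx
    rw [boussinesqOp] at this
    exact this
  have hd_W : ∀ x ∈ Icc (0:ℝ) l, HasDerivAt w (lam * ρ x * φ x) x := by
    intro x hx
    rw [← hw_eq x hx]
    exact hd_w x
  have hd_V : ∀ x, HasDerivAt v (w x + q x * deriv φ x) x := by
    intro x
    have h := hd_v x
    have : w x + q x * deriv φ x = deriv v x := by rw [hwdef]; ring
    rwa [this]
  -- boundary values
  have hvl : v l = 0 := by rw [hvdef]; simp only; rw [hφ''l, mul_zero]
  have hv0 : v 0 = 0 := by rw [hvdef]; simp only; rw [hφ''0, mul_zero]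
  -- energy identity
  have huIcc : uIcc (0:ℝ) l = Icc 0 l := uIcc_of_le hl.le
  have hiρ : IntervalIntegrable (fun x => lam * ρ x * φ x) volume 0 l :=
    (((continuous_const.mul hρs.continuous).mul hφ4.continuous)).intervalIntegrable 0 l
  have hiφ1 : IntervalIntegrable (deriv φ) volume 0 l := hφ1c.intervalIntegrable 0 l
  have hiφ2 : IntervalIntegrable (deriv (deriv φ)) volume 0 l := hφ2c.intervalIntegrable 0 l
  have hiv1 : IntervalIntegrable (deriv v) volume 0 l := hv1.continuous.intervalIntegrable 0 l
  have I1 := integral_mul_deriv_eq_deriv_mul (a := 0) (b := l)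
    (u := φ) (u' := deriv φ) (v := w) (v' := fun x => lam * ρ x * φ x)
    (fun x hx => hd_u x) (fun x hx => hd_W x (huIcc ▸ hx)) hiφ1 hiρ
  have I2 := integral_mul_deriv_eq_deriv_mul (a := 0) (b := l)
    (u := deriv φ) (u' := deriv (deriv φ)) (v := v) (v' := deriv v)
    (fun x hx => hd_u1 x) (fun x hx => hd_v x) hiφ2 hiv1
  simp only [hφl, hφ0, hvl, hv0, hcontra, zero_mul, mul_zero, sub_zero, zero_sub] at I1 I2
  -- I1 : ∫ φ * (lam ρ φ) = - ∫ deriv φ * w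
  -- I2 : ∫ deriv φ * deriv v = - ∫ deriv² φ * v
  have hsplit : (∫ x in (0:ℝ)..l, deriv φ x * w x)
      = (∫ x in (0:ℝ)..l, deriv φ x * deriv v x)
        - ∫ x in (0:ℝ)..l, q x * (deriv φ x)^2 := by
    rw [← intervalIntegral.integral_sub (f := fun x => deriv φ x * deriv v x) (g := fun x => q x * deriv φ x ^ 2)
      ((hφ1c.mul hv1.continuous).intervalIntegrable 0 l)
      ((hqs.continuous.mul (hφ1c.pow 2)).intervalIntegrable 0 l)]
    apply intervalIntegral.integral_congr
    intro x hx
    simp only [hwdef]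
    ring
  have hE1 : (∫ x in (0:ℝ)..l, φ x * (lam * ρ x * φ x))
      = lam * ∫ x in (0:ℝ)..l, ρ x * (φ x)^2 := by
    rw [← intervalIntegral.integral_const_mul]
    apply intervalIntegral.integral_congr
    intro x hx
    ring
  have hE2 : (∫ x in (0:ℝ)..l, deriv (deriv φ) x * v x)
      = ∫ x in (0:ℝ)..l, σ x * (deriv (deriv φ) x)^2 := by
    apply intervalIntegral.integral_congr
    intro x hx
    simp only [hvdef]
    ring
  have henergy : lam * (∫ x in (0:ℝ)..l, ρ x * (φ x)^2)
      = (∫ x in (0:ℝ)..l, σ x * (deriv (deriv φ) x)^2)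
        + ∫ x in (0:ℝ)..l, q x * (deriv φ x)^2 := by
    rw [← hE1, I1, hsplit, I2, hE2]
    ring
  have hJpos : 0 < ∫ x in (0:ℝ)..l, ρ x * (φ x)^2 := by
    apply integral_pos_of_point hl (hρs.continuous.mul (hφ4.continuous.pow 2))
      (fun x hx => mul_nonneg (le_trans hρ0.le (hρb x hx)) (sq_nonneg _)) hx₀
    exact mul_pos (lt_of_lt_of_le hρ0 (hρb x₀ hx₀)) (pow_two_pos_of_ne_zero hφx₀)
  have hσint : 0 ≤ ∫ x in (0:ℝ)..l, σ x * (deriv (deriv φ) x)^2 := by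
    apply intervalIntegral.integral_nonneg hl.le
    intro x hx
    exact mul_nonneg (le_trans hσ0.le (hσb x hx)) (sq_nonneg _)
  have hqint : 0 ≤ ∫ x in (0:ℝ)..l, q x * (deriv φ x)^2 := by
    apply intervalIntegral.integral_nonneg hl.le
    intro x hx
    exact mul_nonneg (hqb x hx) (sq_nonneg _)
  have hlam : 0 ≤ lam := by
    by_contra hneg
    push_neg at hneg
    nlinarith [mul_neg_of_neg_of_pos hneg hJpos]
  -- setup for core lemmas
  set P : ℝ → ℝ := fun x => lam * ρ x with hPdef
  have hPc : Continuous P := continuous_const.mul hρs.continuous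
  have hPsign : ∀ x ∈ Icc (0:ℝ) l, 0 ≤ P x := fun x hx =>
    mul_nonneg hlam (le_trans hρ0.le (hρb x hx))
  have hd_WP : ∀ x ∈ Icc (0:ℝ) l, HasDerivAt w (P x * φ x) x := by
    intro x hx
    have := hd_W x hx
    have hPP : P x * φ x = lam * ρ x * φ x := by rw [hPdef]
    rwa [hPP]
  have hV2 : ∀ x ∈ Icc (0:ℝ) l, v x = σ x * deriv (deriv φ) x := fun x _ => rfl
  rcases lt_trichotomy (w l) 0 with hwl | hwl | hwl
  · -- apply core_pos to -φ
    have hcore := core_pos l σ0 hl hσ0 σ q P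
      (fun x => -φ x) (fun x => -deriv φ x) (fun x => -deriv (deriv φ) x)
      (fun x => -v x) (fun x => -w x)
      hσs.continuous hσb hqs.continuous hqb hPsign
      hφ2c.neg hwc.neg
      (fun x => (hd_u x).neg)
      (fun x => (hd_u1 x).neg)
      (fun x => by
        have := (hd_V x).neg
        have heq2 : -(w x + q x * deriv φ x) = -w x + q x * -deriv φ x := by ring
        rwa [heq2] at this)
      (fun x hx => by
        have := (hd_WP x hx).neg
        have heq2 : -(P x * φ x) = P x * -φ x := by ring
        rwa [heq2] at this)
      (fun x hx => by show -v x = σ x * -(deriv (deriv φ) x); rw [hV2 x hx]; ring)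
      (by show -φ l = 0; rw [hφl, neg_zero])
      (by show -deriv φ l = 0; rw [hcontra, neg_zero])
      (by show -v l = 0; rw [hvl, neg_zero])
      (by show (0:ℝ) < -w l; linarith)
    simp only [hφ0, neg_zero] at hcore
    exact lt_irrefl 0 hcore
  · -- backward uniqueness
    have hzero := backward_unique l σ0 hl hσ0 σ q P
      φ (deriv φ) (deriv (deriv φ)) v w
      hσb hqs.continuous hqb hPc hPsign hd_u hd_u1 hd_V hd_WP hV2
      hφl hcontra hvl hwl
    exact hφx₀ (hzero x₀ hx₀)
  · -- apply core_pos to φ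
    have hcore := core_pos l σ0 hl hσ0 σ q P
      φ (deriv φ) (deriv (deriv φ)) v w
      hσs.continuous hσb hqs.continuous hqb hPsign
      hφ2c hwc hd_u hd_u1 hd_V hd_WP hV2
      hφl hcontra hvl hwl
    rw [hφ0] at hcore
    norm_num at hcore
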